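/- Fix t ∈ {1,...,T}, a ∈ (0,1/2), x₀ ∈ ℝ^D, and schedules β, β' ∈ [β_min, β_max]^T ⊂ (0,1)^T. Let ᾱ_t = ∏_{s≤t}(1-β_s), ᾱ'_t = ∏_{s≤t}(1-β'_s), and assume ᾱ_t, ᾱ'_t ∈ [a, 1-a]. Then D_KL(N(√ᾱ'_t x₀, (1-ᾱ'_t)I) ‖ N(√ᾱ_t x₀, (1-ᾱ_t)I)) ≤ (t/(1-β_max))² [D(1-a)²/(4a⁴) + ‖x₀‖²/(8a²)] · ‖β' - β‖_∞². -/

import Mathlib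

lemma aux_abs_prod_sub_prod (S : Finset ℕ) (f g : ℕ → ℝ)
    (hf : ∀ s ∈ S, 0 ≤ f s ∧ f s ≤ 1) (hg : ∀ s ∈ S, 0 ≤ g s ∧ g s ≤ 1) :
    |(∏ s ∈ S, f s) - ∏ s ∈ S, g s| ≤ ∑ s ∈ S, |f s - g s| := by
  induction S using Finset.cons_induction with
  | empty => simp
  | cons a s ha ih =>
    rw [Finset.prod_cons, Finset.prod_cons, Finset.sum_cons]
    have hfa := hf a (Finset.mem_cons_self a s)
    have hga := hg a (Finset.mem_cons_self a s)
    have ih' := ih (fun x hx => hf x (Finset.mem_cons.2 (Or.inr hx)))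
      (fun x hx => hg x (Finset.mem_cons.2 (Or.inr hx)))
    have hQ0 : 0 ≤ ∏ x ∈ s, g x :=
      Finset.prod_nonneg fun x hx => (hg x (Finset.mem_cons.2 (Or.inr hx))).1
    have hQ1 : (∏ x ∈ s, g x) ≤ 1 :=
      Finset.prod_le_one (fun x hx => (hg x (Finset.mem_cons.2 (Or.inr hx))).1)
        (fun x hx => (hg x (Finset.mem_cons.2 (Or.inr hx))).2)
    have habsfa : |f a| ≤ 1 := abs_le.mpr ⟨by linarith [hfa.1], hfa.2⟩
    have habsQ : |∏ x ∈ s, g x| ≤ 1 := abs_le.mpr ⟨by linarith, hQ1⟩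
    calc |f a * ∏ x ∈ s, f x - g a * ∏ x ∈ s, g x|
        = |f a * ((∏ x ∈ s, f x) - ∏ x ∈ s, g x) + (f a - g a) * ∏ x ∈ s, g x| := by
          ring_nf
      _ ≤ |f a * ((∏ x ∈ s, f x) - ∏ x ∈ s, g x)| + |(f a - g a) * ∏ x ∈ s, g x| :=
          abs_add_le _ _
      _ = |f a| * |(∏ x ∈ s, f x) - ∏ x ∈ s, g x| + |f a - g a| * |∏ x ∈ s, g x| := by
          rw [abs_mul, abs_mul]
      _ ≤ 1 * |(∏ x ∈ s, f x) - ∏ x ∈ s, g x| + |f a - g a| * 1 := by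
          gcongr <;> first | exact abs_nonneg _ | assumption
      _ = |f a - g a| + |(∏ x ∈ s, f x) - ∏ x ∈ s, g x| := by ring
      _ ≤ |f a - g a| + ∑ x ∈ s, |f x - g x| := by linarith

lemma aux_log_ge_one {x : ℝ} (hx : 1 ≤ x) :
    x - 1 - Real.log x ≤ (x - 1) ^ 2 / 2 := by
  set F := fun z : ℝ => (z - 1) ^ 2 / 2 + Real.log z - (z - 1) with hF
  have hder : ∀ y : ℝ, 0 < y → HasDerivAt F ((y - 1) + y⁻¹ - 1) y := by
    intro y hy
    have h1 : HasDerivAt (fun z : ℝ => z - 1) 1 y := (hasDerivAt_id y).sub_const 1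
    have h2 : HasDerivAt (fun z : ℝ => (z - 1) ^ 2 / 2) (y - 1) y := by
      have := (h1.pow 2).div_const 2
      refine this.congr_deriv ?_
      simp
    exact (h2.add (Real.hasDerivAt_log hy.ne')).sub h1
  have hmono : MonotoneOn F (Set.Ici 1) := by
    apply monotoneOn_of_deriv_nonneg (convex_Ici 1)
    · intro y hy
      have : (0:ℝ) < y := lt_of_lt_of_le one_pos hy
      exact ((hder y this).continuousAt).continuousWithinAt
    · intro y hy
      rw [interior_Ici] at hy
      have hy0 : (0:ℝ) < y := lt_trans one_pos hy
      exact ((hder y hy0).differentiableAt).differentiableWithinAt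
    · intro y hy
      rw [interior_Ici] at hy
      have hy0 : (0:ℝ) < y := lt_trans one_pos hy
      rw [(hder y hy0).deriv]
      have e : (y - 1) + y⁻¹ - 1 = (y - 1) ^ 2 / y := by field_simp; ring
      rw [e]; positivity
  have h := hmono (Set.self_mem_Ici) hx hx
  simp only [hF] at h
  simp at h
  linarith

lemma aux_log_le_one {x : ℝ} (hx0 : 0 < x) (hx1 : x ≤ 1) :
    x - 1 - Real.log x ≤ (x - 1) ^ 2 / (2 * x ^ 2) := by
  set F := fun z : ℝ => (z - 1) ^ 2 / (2 * z ^ 2) + Real.log z - (z - 1) with hF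
  have hder : ∀ y : ℝ, 0 < y → HasDerivAt F ((y - 1) / y ^ 3 + y⁻¹ - 1) y := by
    intro y hy
    have h1 : HasDerivAt (fun z : ℝ => z - 1) 1 y := (hasDerivAt_id y).sub_const 1
    have hnum := h1.pow 2
    have hden : HasDerivAt (fun z : ℝ => 2 * z ^ 2) (2 * (2 * y ^ 1)) y :=
      (hasDerivAt_pow 2 y).const_mul 2
    have hq := hnum.div hden (by positivity)
    have h2 : HasDerivAt (fun z : ℝ => (z - 1) ^ 2 / (2 * z ^ 2)) ((y - 1) / y ^ 3) y := by
      refine hq.congr_deriv ?_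
      simp only [Pi.pow_apply]
      field_simp
      ring
    exact (h2.add (Real.hasDerivAt_log hy.ne')).sub h1
  have hanti : AntitoneOn F (Set.Icc x 1) := by
    apply antitoneOn_of_deriv_nonpos (convex_Icc x 1)
    · intro y hy
      have : (0:ℝ) < y := lt_of_lt_of_le hx0 hy.1
      exact ((hder y this).continuousAt).continuousWithinAt
    · intro y hy
      rw [interior_Icc] at hy
      have hy0 : (0:ℝ) < y := lt_of_lt_of_le hx0 hy.1.le
      exact ((hder y hy0).differentiableAt).differentiableWithinAt
    · intro y hy
      rw [interior_Icc] at hy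
      have hy0 : (0:ℝ) < y := lt_of_lt_of_le hx0 hy.1.le
      rw [(hder y hy0).deriv]
      have e : (y - 1) / y ^ 3 + y⁻¹ - 1 = (y - 1) * (1 - y ^ 2) / y ^ 3 := by
        field_simp; ring
      rw [e]
      apply div_nonpos_of_nonpos_of_nonneg
      · apply mul_nonpos_of_nonpos_of_nonneg
        · linarith [hy.2]
        · nlinarith [hy.2, hy0]
      · positivity
  have h := hanti (Set.mem_Icc.2 ⟨le_rfl, hx1⟩) (Set.mem_Icc.2 ⟨hx1, le_rfl⟩) hx1
  simp only [hF] at h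
  simp at h
  linarith

lemma aux_core {a v v' : ℝ} (ha : 0 < a) (hv : a ≤ v) (hv' : a ≤ v') :
    v' / v - 1 - Real.log (v' / v) ≤ (v' - v) ^ 2 / (2 * a ^ 2) := by
  have hv0 : 0 < v := lt_of_lt_of_le ha hv
  have hv'0 : 0 < v' := lt_of_lt_of_le ha hv'
  rcases le_total v v' with h | h
  · refine le_trans (aux_log_ge_one ((one_le_div hv0).2 h)) ?_
    have e : (v' / v - 1) ^ 2 / 2 = (v' - v) ^ 2 / (2 * v ^ 2) := by
      rw [div_sub_one hv0.ne', div_pow, div_div, mul_comm]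
    rw [e]
    exact div_le_div_of_nonneg_left (sq_nonneg _) (by positivity) (by nlinarith)
  · have hr1 : v' / v ≤ 1 := (div_le_one hv0).2 h
    have hr0 : 0 < v' / v := div_pos hv'0 hv0
    refine le_trans (aux_log_le_one hr0 hr1) ?_
    have e : (v' / v - 1) ^ 2 / (2 * (v' / v) ^ 2) = (v' - v) ^ 2 / (2 * v' ^ 2) := by
      rw [div_sub_one hv0.ne', div_pow, div_pow]
      field_simp
    rw [e]
    exact div_le_div_of_nonneg_left (sq_nonneg _) (by positivity) (by nlinarith)



/-- KL divergence between the isotropic Gaussians `N(μ', v'I)` and `N(μ, vI)` on `ℝ^D`: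
`½ [D (v'/v - 1 - log(v'/v)) + ‖μ' - μ‖²/v]`. -/
noncomputable def klIso (D : ℕ) (μ μ' : EuclideanSpace ℝ (Fin D)) (v v' : ℝ) : ℝ :=
  (1 / 2) * ((D : ℝ) * (v' / v - 1 - Real.log (v' / v)) + ‖μ' - μ‖ ^ 2 / v)

set_option maxHeartbeats 1000000 in
/-- Stable forward drift under schedule updates: for `t ∈ {1,…,T}` and schedules
`β, β' ∈ [β_min, β_max]^T ⊂ (0,1)^T` with `ᾱ_t = ∏_{s≤t}(1-β_s)`,
`ᾱ'_t = ∏_{s≤t}(1-β'_s)` both in `[a, 1-a]`,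
`D_KL(N(√ᾱ'_t x₀,(1-ᾱ'_t)I) ‖ N(√ᾱ_t x₀,(1-ᾱ_t)I))
  ≤ (t/(1-β_max))² [D(1-a)²/(4a⁴) + ‖x₀‖²/(8a²)] ‖β'-β‖_∞²`. -/
theorem stable_forward_drift (D T t : ℕ) (ht : t ∈ Finset.Icc 1 T)
    (a : ℝ) (ha : a ∈ Set.Ioo (0 : ℝ) (1 / 2))
    (x₀ : EuclideanSpace ℝ (Fin D)) (βmin βmax : ℝ)
    (h0 : 0 < βmin) (h1 : βmin ≤ βmax) (h2 : βmax < 1) (β β' : ℕ → ℝ)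
    (hβ : ∀ s ∈ Finset.Icc 1 T, β s ∈ Set.Icc βmin βmax)
    (hβ' : ∀ s ∈ Finset.Icc 1 T, β' s ∈ Set.Icc βmin βmax)
    (hne : (Finset.Icc 1 T).Nonempty)
    (hᾱ : (∏ s ∈ Finset.Icc 1 t, (1 - β s)) ∈ Set.Icc a (1 - a))
    (hᾱ' : (∏ s ∈ Finset.Icc 1 t, (1 - β' s)) ∈ Set.Icc a (1 - a)) :
    klIso D (Real.sqrt (∏ s ∈ Finset.Icc 1 t, (1 - β s)) • x₀)
        (Real.sqrt (∏ s ∈ Finset.Icc 1 t, (1 - β' s)) • x₀)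
        (1 - ∏ s ∈ Finset.Icc 1 t, (1 - β s))
        (1 - ∏ s ∈ Finset.Icc 1 t, (1 - β' s)) ≤
      ((t : ℝ) / (1 - βmax)) ^ 2 *
        ((D : ℝ) * (1 - a) ^ 2 / (4 * a ^ 4) + ‖x₀‖ ^ 2 / (8 * a ^ 2)) *
        ((Finset.Icc 1 T).sup' hne (fun s => |β' s - β s|)) ^ 2 := by

  obtain ⟨ha0, ha2⟩ := ha
  rw [Finset.mem_Icc] at ht
  set P := ∏ s ∈ Finset.Icc 1 t, (1 - β s) with hPdef
  set P' := ∏ s ∈ Finset.Icc 1 t, (1 - β' s) with hP'def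
  set Δ := (Finset.Icc 1 T).sup' hne (fun s => |β' s - β s|) with hΔdef
  obtain ⟨s0, hs0⟩ := id hne
  have hΔ0 : 0 ≤ Δ := le_trans (abs_nonneg _) (Finset.le_sup' (fun s => |β' s - β s|) hs0)
  have hsub : Finset.Icc 1 t ⊆ Finset.Icc 1 T := Finset.Icc_subset_Icc le_rfl ht.2
  have hPa : a ≤ P := hᾱ.1
  have hPb : P ≤ 1 - a := hᾱ.2
  have hP'a : a ≤ P' := hᾱ'.1
  have hP'b : P' ≤ 1 - a := hᾱ'.2
  have hva : a ≤ 1 - P := by linarith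
  have hv'a : a ≤ 1 - P' := by linarith
  have hv0 : (0:ℝ) < 1 - P := lt_of_lt_of_le ha0 hva
  have hnormx : (0:ℝ) ≤ ‖x₀‖ ^ 2 := sq_nonneg _
  -- bound on |P' - P|
  have hδ : |P' - P| ≤ (t : ℝ) * Δ := by
    have hA1 : |P' - P| ≤ ∑ s ∈ Finset.Icc 1 t, |(1 - β' s) - (1 - β s)| := by
      apply aux_abs_prod_sub_prod
      · intro s hs
        obtain ⟨hl, hr⟩ := hβ' s (hsub hs)
        exact ⟨by linarith, by linarith⟩
      · intro s hs
        obtain ⟨hl, hr⟩ := hβ s (hsub hs)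
        exact ⟨by linarith, by linarith⟩
    have hA2 : ∑ s ∈ Finset.Icc 1 t, |(1 - β' s) - (1 - β s)|
        ≤ (Finset.Icc 1 t).card • Δ := by
      apply Finset.sum_le_card_nsmul
      intro s hs
      have e : (1 - β' s) - (1 - β s) = -(β' s - β s) := by ring
      rw [e, abs_neg]
      exact Finset.le_sup' (fun s => |β' s - β s|) (hsub hs)
    have hcard : (Finset.Icc 1 t).card = t := by
      rw [Nat.card_Icc]; omega
    rw [hcard, nsmul_eq_mul] at hA2
    linarith
  have hb : (0:ℝ) < 1 - βmax := by linarith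
  have hδsq : (P' - P) ^ 2 ≤ ((t : ℝ) / (1 - βmax)) ^ 2 * Δ ^ 2 := by
    have h3 : (P' - P) ^ 2 ≤ ((t : ℝ) * Δ) ^ 2 := by
      rw [← sq_abs (P' - P)]
      exact pow_le_pow_left₀ (abs_nonneg _) hδ 2
    have ht' : (t : ℝ) ≤ (t : ℝ) / (1 - βmax) := by
      rw [le_div_iff₀ hb]
      nlinarith [Nat.cast_nonneg (α := ℝ) t, lt_of_lt_of_le h0 h1]
    calc (P' - P) ^ 2 ≤ ((t : ℝ) * Δ) ^ 2 := h3
      _ = (t : ℝ) ^ 2 * Δ ^ 2 := by ring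
      _ ≤ ((t : ℝ) / (1 - βmax)) ^ 2 * Δ ^ 2 :=
          mul_le_mul_of_nonneg_right (pow_le_pow_left₀ (Nat.cast_nonneg t) ht' 2) (sq_nonneg Δ)
  -- mean term
  have hnorm : ‖Real.sqrt P' • x₀ - Real.sqrt P • x₀‖ ^ 2
      = (Real.sqrt P' - Real.sqrt P) ^ 2 * ‖x₀‖ ^ 2 := by
    rw [← sub_smul, norm_smul, mul_pow, Real.norm_eq_abs, sq_abs]
  have hs2 : (Real.sqrt P' - Real.sqrt P) ^ 2 * (4 * a) ≤ (P' - P) ^ 2 := by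
    have e1 : Real.sqrt P' ^ 2 = P' := Real.sq_sqrt (le_trans ha0.le hP'a)
    have e2 : Real.sqrt P ^ 2 = P := Real.sq_sqrt (le_trans ha0.le hPa)
    have h4 : (Real.sqrt P' - Real.sqrt P) * (Real.sqrt P' + Real.sqrt P) = P' - P := by
      nlinarith [e1, e2]
    have h5 : 2 * Real.sqrt a ≤ Real.sqrt P' + Real.sqrt P := by
      have hq1 := Real.sqrt_le_sqrt hPa
      have hq2 := Real.sqrt_le_sqrt hP'a
      linarith
    have hsa : Real.sqrt a ^ 2 = a := Real.sq_sqrt ha0.le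
    have hsa0 : 0 < Real.sqrt a := Real.sqrt_pos.2 ha0
    have hSnn : 0 ≤ 2 * Real.sqrt a := by positivity
    have hS2 : 4 * a ≤ (Real.sqrt P' + Real.sqrt P) ^ 2 := by
      calc 4 * a = (2 * Real.sqrt a) ^ 2 := by rw [mul_pow, hsa]; ring
        _ ≤ (Real.sqrt P' + Real.sqrt P) ^ 2 := pow_le_pow_left₀ hSnn h5 2
    have heq : (P' - P) ^ 2
        = (Real.sqrt P' - Real.sqrt P) ^ 2 * (Real.sqrt P' + Real.sqrt P) ^ 2 := by
      rw [← mul_pow, h4]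
    rw [heq]
    exact mul_le_mul_of_nonneg_left hS2 (sq_nonneg _)
  have hterm2 : ‖Real.sqrt P' • x₀ - Real.sqrt P • x₀‖ ^ 2 / (1 - P)
      ≤ (P' - P) ^ 2 * ‖x₀‖ ^ 2 / (4 * a ^ 2) := by
    rw [hnorm, div_le_div_iff₀ hv0 (by positivity)]
    calc (Real.sqrt P' - Real.sqrt P) ^ 2 * ‖x₀‖ ^ 2 * (4 * a ^ 2)
        = ((Real.sqrt P' - Real.sqrt P) ^ 2 * (4 * a)) * (a * ‖x₀‖ ^ 2) := by ring
      _ ≤ (P' - P) ^ 2 * (a * ‖x₀‖ ^ 2) :=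
          mul_le_mul_of_nonneg_right hs2 (mul_nonneg ha0.le hnormx)
      _ = ((P' - P) ^ 2 * ‖x₀‖ ^ 2) * a := by ring
      _ ≤ ((P' - P) ^ 2 * ‖x₀‖ ^ 2) * (1 - P) :=
          mul_le_mul_of_nonneg_left hva (mul_nonneg (sq_nonneg _) hnormx)
      _ = (P' - P) ^ 2 * ‖x₀‖ ^ 2 * (1 - P) := by ring
  -- variance term
  have hA : (1 - P') / (1 - P) - 1 - Real.log ((1 - P') / (1 - P))
      ≤ (P' - P) ^ 2 / (2 * a ^ 2) := by
    have h := aux_core ha0 hva hv'a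
    have e : ((1 - P') - (1 - P)) ^ 2 = (P' - P) ^ 2 := by ring
    rw [e] at h
    exact h
  have hC : (D : ℝ) / (4 * a ^ 2) + ‖x₀‖ ^ 2 / (8 * a ^ 2)
      ≤ (D : ℝ) * (1 - a) ^ 2 / (4 * a ^ 4) + ‖x₀‖ ^ 2 / (8 * a ^ 2) := by
    have e : (D : ℝ) / (4 * a ^ 2) = (D : ℝ) * a ^ 2 / (4 * a ^ 4) := by
      field_simp
    have haa : a ^ 2 ≤ (1 - a) ^ 2 := by nlinarith
    have h6 : (D : ℝ) * a ^ 2 / (4 * a ^ 4) ≤ (D : ℝ) * (1 - a) ^ 2 / (4 * a ^ 4) := by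
      gcongr
    rw [← e] at h6
    linarith
  have hterm1 : (D : ℝ) * ((1 - P') / (1 - P) - 1 - Real.log ((1 - P') / (1 - P)))
      ≤ (D : ℝ) * ((P' - P) ^ 2 / (2 * a ^ 2)) :=
    mul_le_mul_of_nonneg_left hA (Nat.cast_nonneg D)
  have hC0 : (0:ℝ) ≤ (D : ℝ) / (4 * a ^ 2) + ‖x₀‖ ^ 2 / (8 * a ^ 2) := by positivity
  calc klIso D (Real.sqrt P • x₀) (Real.sqrt P' • x₀) (1 - P) (1 - P')
      = (1 / 2) * ((D : ℝ) * ((1 - P') / (1 - P) - 1 - Real.log ((1 - P') / (1 - P)))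
          + ‖Real.sqrt P' • x₀ - Real.sqrt P • x₀‖ ^ 2 / (1 - P)) := rfl
    _ ≤ (1 / 2) * ((D : ℝ) * ((P' - P) ^ 2 / (2 * a ^ 2))
          + (P' - P) ^ 2 * ‖x₀‖ ^ 2 / (4 * a ^ 2)) := by
        apply mul_le_mul_of_nonneg_left (add_le_add hterm1 hterm2) (by norm_num)
    _ = (P' - P) ^ 2 * ((D : ℝ) / (4 * a ^ 2) + ‖x₀‖ ^ 2 / (8 * a ^ 2)) := by ring
    _ ≤ (((t : ℝ) / (1 - βmax)) ^ 2 * Δ ^ 2)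
          * ((D : ℝ) * (1 - a) ^ 2 / (4 * a ^ 4) + ‖x₀‖ ^ 2 / (8 * a ^ 2)) :=
        mul_le_mul hδsq hC hC0 (by positivity)
    _ = ((t : ℝ) / (1 - βmax)) ^ 2
          * ((D : ℝ) * (1 - a) ^ 2 / (4 * a ^ 4) + ‖x₀‖ ^ 2 / (8 * a ^ 2)) * Δ ^ 2 := by
        ring
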